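/- (Failure of alternating projections between cylinder and spiral.) In ℝ³, let B = {x : x₁² + x₂² = 1, 0 ≤ x₃ ≤ 1} (the cylinder mantle), F = {(cos t, sin t, 0) : t ≥ 0} (the base circle), and A = {((1 + e^{−t})·cos t, (1 + e^{−t})·sin t, e^{−t/2}) : t ≥ 0} ∪ F (a logarithmic spiral winding onto F). Then every alternating sequence (a_k, b_k) between A and B, i.e. b_k ∈ P_B(a_k) and a_{k+1} ∈ P_A(b_k), started at a₁ ∈ A \ F, satisfies a_k − a_{k+1} → 0, b_k − b_{k+1} → 0, a_k − b_k → 0, yet neither (a_k) nor (b_k) converges, and the set of accumulation points of each sequence equals F. -/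

import Mathlib

open Set Metric Filter Topology Real

set_option maxHeartbeats 1000000

noncomputable section

/-- The (possibly multivalued) metric projection onto a set `S`. -/
def projSet {E : Type*} [NormedAddCommGroup E] (S : Set E) (x : E) : Set E :=
  {s | s ∈ S ∧ ‖x - s‖ = Metric.infDist x S}

/-- A point of ℝ³. -/
def pt3 (a b c : ℝ) : EuclideanSpace ℝ (Fin 3) :=
  (WithLp.equiv 2 (Fin 3 → ℝ)).symm ![a, b, c]

/-- The cylinder mantle `B = {x : x₁² + x₂² = 1, 0 ≤ x₃ ≤ 1}`. -/
def cylinder : Set (EuclideanSpace ℝ (Fin 3)) :=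
  {x | (x 0)^2 + (x 1)^2 = 1 ∧ 0 ≤ x 2 ∧ x 2 ≤ 1}

/-- The base circle `F = {(cos t, sin t, 0) : t ≥ 0}`. -/
def baseCircle : Set (EuclideanSpace ℝ (Fin 3)) :=
  {x | ∃ t : ℝ, 0 ≤ t ∧ x = pt3 (cos t) (sin t) 0}

/-- The logarithmic spiral winding onto the base circle. -/
def spiral : Set (EuclideanSpace ℝ (Fin 3)) :=
  {x | ∃ t : ℝ, 0 ≤ t ∧
    x = pt3 ((1 + exp (-t)) * cos t) ((1 + exp (-t)) * sin t) (exp (-t/2))} ∪ baseCircle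

/-- The set of accumulation points of a sequence. -/
def accPts (u : ℕ → EuclideanSpace ℝ (Fin 3)) : Set (EuclideanSpace ℝ (Fin 3)) :=
  {x | ∃ φ : ℕ → ℕ, StrictMono φ ∧ Tendsto (u ∘ φ) atTop (𝓝 x)}

/-! ### Auxiliary geometry -/

lemma dist_sq_eq3 (x y : EuclideanSpace ℝ (Fin 3)) :
    dist x y ^ 2 = (x 0 - y 0)^2 + (x 1 - y 1)^2 + (x 2 - y 2)^2 := by
  rw [EuclideanSpace.dist_eq, Real.sq_sqrt (by positivity)]
  simp [Fin.sum_univ_three, Real.dist_eq, sq_abs]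

lemma pt3_ext {a b c : ℝ} {x : EuclideanSpace ℝ (Fin 3)} (h0 : x 0 = a) (h1 : x 1 = b)
    (h2 : x 2 = c) : x = pt3 a b c := by
  ext i; fin_cases i <;> simpa [pt3]

/-- the spiral point at parameter `s` -/
def spt (s : ℝ) : EuclideanSpace ℝ (Fin 3) :=
  pt3 ((1 + exp (-s)) * cos s) ((1 + exp (-s)) * sin s) (exp (-s/2))

/-- a point on the cylinder over angle `θ` at height `h` -/
def cpt (θ h : ℝ) : EuclideanSpace ℝ (Fin 3) := pt3 (cos θ) (sin θ) h

lemma spt_mem {s : ℝ} (hs : 0 ≤ s) : spt s ∈ spiral := Or.inl ⟨s, hs, rfl⟩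

lemma spt_inj {s s' : ℝ} (h : spt s = spt s') : s = s' := by
  have h2 : exp (-s/2) = exp (-s'/2) := congrArg (fun x => x 2) h
  have := Real.exp_injective h2
  linarith

/-- squared distance from a cylinder point to a spiral point -/
lemma dist_cpt_spt_sq (t h s : ℝ) :
    dist (cpt t h) (spt s) ^ 2
      = (1 + exp (-s))^2 - 2*(1 + exp (-s))*cos (s - t) + 1 + (exp (-s/2) - h)^2 := by
  rw [cpt, spt, show dist (pt3 (cos t) (sin t) h)
      (pt3 ((1 + exp (-s)) * cos s) ((1 + exp (-s)) * sin s) (exp (-s/2))) ^ 2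
      = (cos t - (1 + exp (-s)) * cos s)^2 + (sin t - (1 + exp (-s)) * sin s)^2
        + (h - exp (-s/2))^2 from by rw [dist_sq_eq3]; rfl]
  rw [Real.cos_sub]
  linear_combination sin_sq_add_cos_sq t + (1 + exp (-s))^2 * sin_sq_add_cos_sq s

/-- value of gfun along the diagonal -/
lemma dist_cpt_spt_self_sq (t : ℝ) :
    dist (cpt t (exp (-t/2))) (spt t) ^ 2 = exp (-t) ^ 2 := by
  rw [dist_cpt_spt_sq]; simp; ring

lemma dist_spt_cpt (t : ℝ) : dist (spt t) (cpt t (exp (-t/2))) = exp (-t) := by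
  have h : dist (spt t) (cpt t (exp (-t/2))) ^ 2 = exp (-t) ^ 2 := by
    rw [dist_comm]; exact dist_cpt_spt_self_sq t
  have h1 := dist_nonneg (x := spt t) (y := cpt t (exp (-t/2)))
  nlinarith [exp_pos (-t)]

/-! ### Projection onto the cylinder -/

lemma cpt_mem_cyl {t h : ℝ} (h0 : 0 ≤ h) (h1 : h ≤ 1) : cpt t h ∈ cylinder := by
  refine ⟨?_, h0, h1⟩
  show cos t ^ 2 + sin t ^ 2 = 1
  rw [add_comm]; exact sin_sq_add_cos_sq t

lemma cyl_dist_lb {t : ℝ} (ht : 0 ≤ t) {y : EuclideanSpace ℝ (Fin 3)} (hy : y ∈ cylinder) :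
    exp (-t) ≤ dist (spt t) y := by
  obtain ⟨hxy, hy0, hy1⟩ := hy
  have hd := dist_sq_eq3 (spt t) y
  have e0 : spt t 0 = (1 + exp (-t)) * cos t := rfl
  have e1 : spt t 1 = (1 + exp (-t)) * sin t := rfl
  have e2 : spt t 2 = exp (-t/2) := rfl
  rw [e0, e1, e2] at hd
  have hh0 : 0 < exp (-t/2) := exp_pos _
  have hsq : exp (-t) ≤ 1 := exp_le_one_iff.2 (by linarith)
  have key : exp (-t) ^ 2 ≤ dist (spt t) y ^ 2 := by
    rw [hd]
    nlinarith [sq_nonneg (y 0 - cos t), sq_nonneg (y 1 - sin t), sq_nonneg (exp (-t/2) - y 2),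
      sin_sq_add_cos_sq t, exp_pos (-t)]
  nlinarith [dist_nonneg (x := spt t) (y := y), exp_pos (-t)]

lemma infDist_cyl {t : ℝ} (ht : 0 ≤ t) : infDist (spt t) cylinder = exp (-t) := by
  have hh1 : exp (-t/2) ≤ 1 := exp_le_one_iff.2 (by linarith)
  refine le_antisymm ?_ ?_
  · calc infDist (spt t) cylinder ≤ dist (spt t) (cpt t (exp (-t/2))) :=
        infDist_le_dist_of_mem (cpt_mem_cyl (exp_pos _).le hh1)
      _ = exp (-t) := dist_spt_cpt t
  · by_contra hlt
    push_neg at hlt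
    obtain ⟨y, hy, hdy⟩ := (infDist_lt_iff
      ⟨cpt t (exp (-t/2)), cpt_mem_cyl (t := t) (exp_pos _).le hh1⟩).1 hlt
    exact absurd hdy (not_lt.2 (cyl_dist_lb ht hy))

/-- The projection of the spiral point onto the cylinder is unique and explicit. -/
lemma cyl_proj {t : ℝ} (ht : 0 ≤ t) {y : EuclideanSpace ℝ (Fin 3)}
    (hy : y ∈ projSet cylinder (spt t)) : y = cpt t (exp (-t/2)) := by
  obtain ⟨hyc, hdy⟩ := hy
  rw [← dist_eq_norm, infDist_cyl ht] at hdy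
  obtain ⟨hxy, hy0, hy1⟩ := hyc
  have hd := dist_sq_eq3 (spt t) y
  rw [hdy] at hd
  have e0 : spt t 0 = (1 + exp (-t)) * cos t := rfl
  have e1 : spt t 1 = (1 + exp (-t)) * sin t := rfl
  have e2 : spt t 2 = exp (-t/2) := rfl
  rw [e0, e1, e2] at hd
  have hcs := sin_sq_add_cos_sq t
  have hu := exp_pos (-t)
  have key : (1 + exp (-t)) * ((y 0 - cos t)^2 + (y 1 - sin t)^2) + (exp (-t/2) - y 2)^2 = 0 := by
    linear_combination (-1 : ℝ) * hd + exp (-t) * hxy - exp (-t) * (1 + exp (-t)) * hcs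
  have hsq0 : (y 0 - cos t)^2 = 0 := by
    nlinarith [sq_nonneg (y 0 - cos t), sq_nonneg (y 1 - sin t), sq_nonneg (exp (-t/2) - y 2)]
  have hsq1 : (y 1 - sin t)^2 = 0 := by
    nlinarith [sq_nonneg (y 0 - cos t), sq_nonneg (y 1 - sin t), sq_nonneg (exp (-t/2) - y 2)]
  have hsq2 : (exp (-t/2) - y 2)^2 = 0 := by
    nlinarith [sq_nonneg (y 0 - cos t), sq_nonneg (y 1 - sin t), sq_nonneg (exp (-t/2) - y 2)]
  have h0 : y 0 = cos t := by have := pow_eq_zero_iff (n := 2) (by norm_num) |>.1 hsq0; linarith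
  have h1 : y 1 = sin t := by have := pow_eq_zero_iff (n := 2) (by norm_num) |>.1 hsq1; linarith
  have h2 : y 2 = exp (-t/2) := by
    have := pow_eq_zero_iff (n := 2) (by norm_num) |>.1 hsq2; linarith
  exact pt3_ext h0 h1 h2

/-! ### Projection onto the spiral -/

/-- arithmetic core of the derivative argument -/
lemma gwit_arith (u ε v c w : ℝ) (hu0 : 0 < u) (hu1 : u ≤ 1) (hε : ε = u^2/4)
    (hv1 : 1 - ε ≤ v) (hv2 : v ≤ 1 - ε + ε^2)
    (hc1 : 1 - ε^2/2 ≤ c) (hc2 : c ≤ 1)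
    (hw1 : 1 - ε/2 ≤ w) (hw2 : w ≤ 1) (hv0 : 0 < v) (hw0 : 0 < w) :
    (1 + u*v)^2 - 2*(1 + u*v)*c + 1 + u*(1-w)^2 < u^2 := by
  have hε0 : 0 < ε := by rw [hε]; positivity
  have hε1 : ε ≤ 1/4 := by nlinarith
  have hA : u*(1-w)^2 ≤ u*(ε/2)^2 := by
    have : (1-w)^2 ≤ (ε/2)^2 := pow_le_pow_left₀ (by linarith) (by linarith) 2
    nlinarith
  have hB : (u*v)^2 ≤ u^2*(1-2*ε+3*ε^2) := by
    have h1 : v^2 ≤ (1-ε+ε^2)^2 := pow_le_pow_left₀ hv0.le hv2 2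
    have h2 : (1-ε+ε^2)^2 ≤ 1-2*ε+3*ε^2 := by nlinarith [pow_pos hε0 3, pow_pos hε0 4]
    calc (u*v)^2 = u^2*v^2 := by ring
      _ ≤ u^2*(1-ε+ε^2)^2 := by nlinarith [sq_nonneg u]
      _ ≤ u^2*(1-2*ε+3*ε^2) := by nlinarith [sq_nonneg u]
  have hC : 2*(1+u*v)*(1-c) ≤ (1+u)*ε^2 := by
    have h1 : 1 + u*v ≤ 1 + u := by nlinarith
    have h2 : (0:ℝ) ≤ 1 - c := by linarith
    have h3 : 1 - c ≤ ε^2/2 := by linarith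
    nlinarith [mul_pos hu0 hv0]
  have hkey : (1 + u*v)^2 - 2*(1 + u*v)*c + 1 + u*(1-w)^2
      = (u*v)^2 + 2*(1+u*v)*(1-c) + u*(1-w)^2 := by ring
  rw [hkey]
  have e0 : (0:ℝ) ≤ 21/4 - (3*u^2+1+u+u/4) := by nlinarith
  have e1 : ε*(3*u^2+1+u+u/4) ≤ 21/16*u^2 := by
    have := mul_nonneg hε0.le e0
    nlinarith
  have e2 : ε*(ε*(3*u^2+1+u+u/4)) ≤ ε*(21/16*u^2) :=
    mul_le_mul_of_nonneg_left e1 hε0.le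
  have e3 : (0:ℝ) < u^2*ε := by positivity
  nlinarith [e2, e3]

/-- strictly closer spiral point slightly further along the spiral -/
lemma gfun_witness {t : ℝ} (ht : 0 ≤ t) :
    ∃ s : ℝ, t < s ∧ dist (cpt t (exp (-t/2))) (spt s) ^ 2 < exp (-t) ^ 2 := by
  set u := exp (-t) with hu
  have hu0 : 0 < u := exp_pos _
  have hu1 : u ≤ 1 := exp_le_one_iff.2 (by linarith)
  set ε := u^2/4 with hε
  have hε0 : 0 < ε := by positivity
  refine ⟨t + ε, by linarith, ?_⟩
  rw [dist_cpt_spt_sq]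
  have hexp1 : exp (-(t+ε)) = u * exp (-ε) := by rw [hu, ← exp_add]; ring_nf
  have hexp2 : exp (-(t+ε)/2) - exp (-t/2) = - (exp (-t/2) * (1 - exp (-ε/2))) := by
    rw [show -(t+ε)/2 = -t/2 + -ε/2 by ring, exp_add]; ring
  have hexp3 : exp (-t/2)^2 = u := by rw [hu, sq, ← exp_add]; congr 1; ring
  have hsub : t + ε - t = ε := by ring
  rw [hexp1, hsub, hexp2]
  have hfinal : (exp (-(t+ε)/2) - exp (-t/2))^2 = u * (1 - exp (-ε/2))^2 := by
    rw [hexp2]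
    calc (-(exp (-t/2) * (1 - exp (-ε/2))))^2 = exp (-t/2)^2 * (1 - exp (-ε/2))^2 := by ring
      _ = u * (1 - exp (-ε/2))^2 := by rw [hexp3]
  rw [show (-(exp (-t/2) * (1 - exp (-ε/2))))^2 = exp (-t/2)^2 * (1 - exp (-ε/2))^2 from by ring,
    hexp3]
  -- now apply the arithmetic lemma
  have hv1 : 1 - ε ≤ exp (-ε) := by linarith [add_one_le_exp (-ε)]
  have hv2 : exp (-ε) ≤ 1 - ε + ε^2 := by
    have h1 : exp (-ε) * (1 + ε) ≤ exp (-ε) * exp ε := by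
      have := add_one_le_exp ε
      nlinarith [exp_pos (-ε)]
    rw [← exp_add] at h1
    simp at h1
    nlinarith [exp_pos (-ε)]
  have hc1 : 1 - ε^2/2 ≤ cos ε := Real.one_sub_sq_div_two_le_cos
  have hw1 : 1 - ε/2 ≤ exp (-ε/2) := by
    have := add_one_le_exp (-ε/2)
    linarith [show -ε/2 + 1 = 1 - ε/2 from by ring, this]
  have hw2 : exp (-ε/2) ≤ 1 := exp_le_one_iff.2 (by linarith)
  have := gwit_arith u ε (exp (-ε)) (cos ε) (exp (-ε/2)) hu0 hu1 rfl hv1 hv2 hc1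
    (Real.cos_le_one ε) hw1 hw2 (exp_pos _) (exp_pos _)
  linarith [this]

/-- distance from a cylinder point of height `exp (-t/2)` to any base-circle point -/
lemma base_dist_lb {t : ℝ} (ht : 0 ≤ t) {y : EuclideanSpace ℝ (Fin 3)} (hy : y ∈ baseCircle) :
    exp (-t) ≤ dist (cpt t (exp (-t/2))) y := by
  obtain ⟨θ, hθ, rfl⟩ := hy
  have hd := dist_sq_eq3 (cpt t (exp (-t/2))) (pt3 (cos θ) (sin θ) 0)
  have e0 : cpt t (exp (-t/2)) 0 = cos t := rfl
  have e1 : cpt t (exp (-t/2)) 1 = sin t := rfl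
  have e2 : cpt t (exp (-t/2)) 2 = exp (-t/2) := rfl
  have f0 : pt3 (cos θ) (sin θ) (0:ℝ) 0 = cos θ := rfl
  have f1 : pt3 (cos θ) (sin θ) (0:ℝ) 1 = sin θ := rfl
  have f2 : pt3 (cos θ) (sin θ) (0:ℝ) 2 = 0 := rfl
  rw [e0, e1, e2, f0, f1, f2] at hd
  have hexp3 : exp (-t/2)^2 = exp (-t) := by rw [sq, ← exp_add]; congr 1; ring
  have hu1 : exp (-t) ≤ 1 := exp_le_one_iff.2 (by linarith)
  have key : exp (-t)^2 ≤ dist (cpt t (exp (-t/2))) (pt3 (cos θ) (sin θ) 0) ^ 2 := by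
    rw [hd]
    nlinarith [sq_nonneg (cos t - cos θ), sq_nonneg (sin t - sin θ), hexp3, exp_pos (-t)]
  nlinarith [dist_nonneg (x := cpt t (exp (-t/2))) (y := pt3 (cos θ) (sin θ) 0), exp_pos (-t)]

/-- structure of the projection of the cylinder point onto the spiral -/
lemma spiral_proj {t : ℝ} (ht : 0 ≤ t) {y : EuclideanSpace ℝ (Fin 3)}
    (hy : y ∈ projSet spiral (cpt t (exp (-t/2)))) :
    ∃ s : ℝ, t < s ∧ y = spt s ∧ dist (cpt t (exp (-t/2))) y < exp (-t) := by
  obtain ⟨hys, hdy⟩ := hy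
  rw [← dist_eq_norm] at hdy
  obtain ⟨sw, hsw, hw⟩ := gfun_witness ht
  have hwlt : dist (cpt t (exp (-t/2))) (spt sw) < exp (-t) := by
    have h1 := dist_nonneg (x := cpt t (exp (-t/2))) (y := spt sw)
    nlinarith [exp_pos (-t)]
  have hinf_lt : infDist (cpt t (exp (-t/2))) spiral < exp (-t) :=
    lt_of_le_of_lt (infDist_le_dist_of_mem (spt_mem (by linarith))) hwlt
  have hdlt : dist (cpt t (exp (-t/2))) y < exp (-t) := by rw [hdy]; exact hinf_lt
  rcases hys with ⟨s, hs0, hEq⟩ | hbase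
  · have hEq' : y = spt s := hEq
    subst hEq'
    refine ⟨s, ?_, rfl, hdlt⟩
    -- from dist^2 ≥ exp(-s)^2 we get exp(-s) < exp(-t), hence t < s
    have hd := dist_cpt_spt_sq t (exp (-t/2)) s
    have hlb : exp (-s)^2 ≤ dist (cpt t (exp (-t/2))) (spt s) ^2 := by
      rw [hd]
      nlinarith [Real.cos_le_one (s - t), exp_pos (-s), sq_nonneg (exp (-s/2) - exp (-t/2)),
        Real.neg_one_le_cos (s - t)]
    have hds : exp (-s) < exp (-t) := by
      have h1 := dist_nonneg (x := cpt t (exp (-t/2))) (y := spt s)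
      nlinarith [exp_pos (-s), exp_pos (-t)]
    have := Real.exp_lt_exp.1 hds
    linarith
  · exact absurd hdlt (not_lt.2 (base_dist_lb ht hbase))

/-! ### Numeric facts and increment bounds -/

lemma exp_half_lb : (1.64:ℝ) ≤ exp (1/2) := by
  have h : exp ((1:ℝ)/2) ^ 2 = exp 1 := by rw [sq, ← exp_add]; norm_num
  nlinarith [exp_pos ((1:ℝ)/2), Real.exp_one_gt_d9]

lemma exp_neg_half_ub : exp (-(1:ℝ)/2) ≤ 0.61 := by
  rw [show -(1:ℝ)/2 = -(1/2) by ring, exp_neg]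
  rw [inv_le_comm₀ (exp_pos _) (by norm_num)]
  calc (0.61:ℝ)⁻¹ ≤ 1.64 := by norm_num
    _ ≤ exp (1/2) := exp_half_lb

lemma exp_neg_two_ub : exp (-2:ℝ) ≤ 0.14 := by
  rw [show (-2:ℝ) = -(2) by ring, exp_neg]
  rw [inv_le_comm₀ (exp_pos _) (by norm_num)]
  have h : exp (2:ℝ) = exp 1 ^ 2 := by rw [sq, ← exp_add]; norm_num
  calc (0.14:ℝ)⁻¹ ≤ 7.14286 := by norm_num
    _ ≤ exp 1 ^ 2 := by nlinarith [Real.exp_one_gt_d9]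
    _ = exp 2 := h.symm

/-- lower bound: `gfun ≥ 2 - 2cos(s-t)` -/
lemma gfun_lb_angle (t s : ℝ) :
    2 - 2 * cos (s - t) ≤ dist (cpt t (exp (-t/2))) (spt s) ^ 2 := by
  rw [dist_cpt_spt_sq]
  nlinarith [exp_pos (-s), Real.cos_le_one (s - t), Real.neg_one_le_cos (s - t),
    sq_nonneg (exp (-s/2) - exp (-t/2)), sq_nonneg (exp (-s))]

/-- lower bound: `gfun ≥ (exp(-s/2)-exp(-t/2))^2` -/
lemma gfun_lb_height (t s : ℝ) :
    (exp (-s/2) - exp (-t/2)) ^ 2 ≤ dist (cpt t (exp (-t/2))) (spt s) ^ 2 := by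
  rw [dist_cpt_spt_sq]
  nlinarith [exp_pos (-s), Real.cos_le_one (s - t), Real.neg_one_le_cos (s - t)]

/-- if `2 ≤ t` then the next parameter is less than `t+1` and within `(π/2)·exp(-t)` -/
lemma increment_bound {t s : ℝ} (ht2 : 2 ≤ t) (hts : t < s)
    (hd : dist (cpt t (exp (-t/2))) (spt s) < exp (-t)) :
    s - t ≤ π * exp (-t) := by
  have hu0 : 0 < exp (-t) := exp_pos _
  have hd2 : dist (cpt t (exp (-t/2))) (spt s) ^ 2 < exp (-t) ^ 2 := by
    nlinarith [dist_nonneg (x := cpt t (exp (-t/2))) (y := spt s)]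
  -- Step 1: s < t + 1
  have hs1 : s < t + 1 := by
    by_contra hcon
    push_neg at hcon
    have h1 : exp (-s/2) ≤ exp (-t/2) * exp (-(1:ℝ)/2) := by
      rw [← exp_add]
      exact exp_le_exp.2 (by linarith)
    have h2 : exp (-t/2) * (1 - exp (-(1:ℝ)/2)) ≤ exp (-t/2) - exp (-s/2) := by nlinarith [exp_pos (-t/2)]
    have h3 : (exp (-t/2) - exp (-s/2))^2 ≤ exp (-t)^2 := by
      nlinarith [gfun_lb_height t s, sq_nonneg (exp (-s/2) - exp (-t/2))]
    have h4 : exp (-t/2) * (1 - exp (-(1:ℝ)/2)) ≤ exp (-t) := by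
      have h5 : 0 ≤ exp (-t/2) - exp (-s/2) := by
        nlinarith [exp_pos (-s/2), exp_pos (-t/2), exp_neg_half_ub, exp_pos (-t/2)]
      nlinarith [exp_pos (-t)]
    -- exp(-t/2) * 0.39 ≤ exp(-t) = exp(-t/2)^2 ⇒ 0.39 ≤ exp(-t/2) ≤ exp(-1) contradiction
    have hexp3 : exp (-t/2)^2 = exp (-t) := by rw [sq, ← exp_add]; congr 1; ring
    have h6 : (0.39:ℝ) ≤ exp (-t/2) := by
      nlinarith [exp_pos (-t/2), exp_neg_half_ub]
    have h7 : exp (-t/2) ≤ exp (-(1:ℝ)) := exp_le_exp.2 (by linarith)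
    have h8 : exp (-(1:ℝ))^2 ≤ 0.14 := by
      have : exp (-(1:ℝ))^2 = exp (-2:ℝ) := by rw [sq, ← exp_add]; congr 1; ring
      rw [this]; exact exp_neg_two_ub
    nlinarith [exp_pos (-(1:ℝ))]
  -- Step 2: angle bound
  set Δ := s - t with hΔ
  have hΔ0 : 0 < Δ := by simp [hΔ]; linarith
  have hΔ1 : Δ < 1 := by simp [hΔ]; linarith
  have hcosΔ : 2 - 2 * cos Δ < exp (-t)^2 := lt_of_le_of_lt (gfun_lb_angle t s) hd2
  -- 1 - cos Δ = 2 sin(Δ/2)^2 ≥ 2 (Δ/π)^2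
  have hsin : Δ / π ≤ sin (Δ/2) := by
    have hπ := Real.pi_gt_three
    have := Real.mul_le_sin (x := Δ/2) (by linarith) (by nlinarith)
    calc Δ / π = 2/π * (Δ/2) := by ring
      _ ≤ sin (Δ/2) := this
  have hcos2 : cos Δ = 1 - 2 * sin (Δ/2)^2 := by
    have h1 := Real.cos_two_mul (Δ/2)
    rw [show 2*(Δ/2) = Δ by ring] at h1
    have h2 := Real.sin_sq_add_cos_sq (Δ/2)
    linarith
  have hπ := Real.pi_gt_three
  have hkey : 2 * (Δ/π)^2 ≤ exp (-t)^2 := by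
    have hΔπ : 0 ≤ Δ / π := by positivity
    nlinarith [hsin, hcosΔ, hcos2, sq_nonneg (sin (Δ/2))]
  -- Δ ≤ π u/√2 ≤ π/2 u? 1/√2 ≤ 1/2 is FALSE. adjust: we claim Δ ≤ π * exp(-t). Recheck below.
  have hπ0 : 0 < π := pi_pos
  have hkey2 : 2 * Δ^2 ≤ π^2 * exp (-t)^2 := by
    have h1 : (Δ/π)^2 = Δ^2 / π^2 := by rw [div_pow]
    rw [h1] at hkey
    have h2 := mul_le_mul_of_nonneg_left hkey (le_of_lt (pow_pos hπ0 2))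
    calc 2*Δ^2 = π^2 * (2 * (Δ^2/π^2)) := by field_simp
      _ ≤ π^2 * exp (-t)^2 := h2
  by_contra hcon
  push_neg at hcon
  have h3 : π * exp (-t) < Δ := hcon
  have h4 : (π * exp (-t))^2 < Δ^2 := by
    nlinarith [mul_pos hπ0 hu0]
  nlinarith [sq_nonneg Δ]

/-! ### Continuity and topology helpers -/

lemma continuous_pt3_comp {f g h : ℝ → ℝ} (hf : Continuous f) (hg : Continuous g)
    (hh : Continuous h) : Continuous fun x => pt3 (f x) (g x) (h x) := by
  unfold pt3
  apply (PiLp.continuous_toLp 2 (fun _ : Fin 3 => ℝ)).comp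
  apply continuous_pi
  intro i
  fin_cases i <;> simpa

lemma continuous_spt : Continuous spt := by
  unfold spt
  exact continuous_pt3_comp (by fun_prop) (by fun_prop) (by fun_prop)

lemma continuous_cptcurve : Continuous fun τ : ℝ => cpt τ (exp (-τ/2)) := by
  unfold cpt
  exact continuous_pt3_comp (by fun_prop) (by fun_prop) (by fun_prop)

lemma continuous_coord3 (i : Fin 3) : Continuous fun x : EuclideanSpace ℝ (Fin 3) => x i := by
  exact (continuous_apply i).comp (PiLp.continuous_ofLp 2 (fun _ : Fin 3 => ℝ))

lemma circle_param {x0 x1 : ℝ} (h : x0^2 + x1^2 = 1) :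
    ∃ θ : ℝ, 0 ≤ θ ∧ cos θ = x0 ∧ sin θ = x1 := by
  have hx0l : -1 ≤ x0 := by nlinarith [sq_nonneg x1]
  have hx0u : x0 ≤ 1 := by nlinarith [sq_nonneg x1]
  rcases le_or_gt 0 x1 with h1 | h1
  · refine ⟨arccos x0, arccos_nonneg _, cos_arccos hx0l hx0u, ?_⟩
    rw [sin_arccos, show 1 - x0^2 = x1^2 by linarith, Real.sqrt_sq h1]
  · refine ⟨2*π - arccos x0, by nlinarith [arccos_le_pi x0, pi_pos], ?_, ?_⟩
    · rw [Real.cos_sub, Real.cos_two_pi, Real.sin_two_pi]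
      rw [cos_arccos hx0l hx0u]; ring
    · rw [Real.sin_sub, Real.cos_two_pi, Real.sin_two_pi]
      rw [sin_arccos, show 1 - x0^2 = x1^2 by linarith, Real.sqrt_sq_eq_abs,
        abs_of_neg h1]; ring

lemma accPts_congr {u v : ℕ → EuclideanSpace ℝ (Fin 3)}
    (h : Tendsto (fun k => u k - v k) atTop (𝓝 0)) : accPts u = accPts v := by
  ext x
  constructor
  · rintro ⟨φ, hφ, hconv⟩
    refine ⟨φ, hφ, ?_⟩
    have h2 : Tendsto (fun j => u (φ j) - v (φ j)) atTop (𝓝 0) :=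
      h.comp hφ.tendsto_atTop
    have := hconv.sub h2
    simpa [Function.comp_def] using this
  · rintro ⟨φ, hφ, hconv⟩
    refine ⟨φ, hφ, ?_⟩
    have h2 : Tendsto (fun j => u (φ j) - v (φ j)) atTop (𝓝 0) :=
      h.comp hφ.tendsto_atTop
    have h3 := hconv.add h2
    rw [add_zero] at h3
    refine h3.congr fun j => ?_
    simp only [Function.comp]
    abel

/-! ### Accumulation points -/

lemma accPts_subset_base {a : ℕ → EuclideanSpace ℝ (Fin 3)} {t : ℕ → ℝ}
    (hat : ∀ k, a k = spt (t k)) (htop : Tendsto t atTop atTop) :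
    accPts a ⊆ baseCircle := by
  rintro x ⟨φ, hφ, hconv⟩
  have htφ : Tendsto (fun j => t (φ j)) atTop atTop := htop.comp hφ.tendsto_atTop
  have huφ : Tendsto (fun j => exp (-(t (φ j)))) atTop (𝓝 0) :=
    Real.tendsto_exp_atBot.comp (tendsto_neg_atTop_atBot.comp htφ)
  have huφ2 : Tendsto (fun j => exp (-(t (φ j))/2)) atTop (𝓝 0) := by
    refine Real.tendsto_exp_atBot.comp ?_
    exact (tendsto_neg_atTop_atBot.comp htφ).atBot_div_const (by norm_num)
  have hc : ∀ i, Tendsto (fun j => (a (φ j)) i) atTop (𝓝 (x i)) := fun i =>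
    ((continuous_coord3 i).tendsto x).comp hconv
  -- third coordinate is 0
  have hx2 : x 2 = 0 := by
    refine tendsto_nhds_unique ?_ huφ2
    refine (hc 2).congr fun j => ?_
    rw [hat (φ j)]; rfl
  -- first two coordinates lie on the unit circle
  have hsum : Tendsto (fun j => ((a (φ j)) 0)^2 + ((a (φ j)) 1)^2) atTop
      (𝓝 ((x 0)^2 + (x 1)^2)) := ((hc 0).pow 2).add ((hc 1).pow 2)
  have hsum2 : Tendsto (fun j => ((a (φ j)) 0)^2 + ((a (φ j)) 1)^2) atTop (𝓝 1) := by
    have h1 : Tendsto (fun j => (1 + exp (-(t (φ j))))^2) atTop (𝓝 1) := by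
      have := (tendsto_const_nhds (x := (1:ℝ)).add huφ).pow 2
      norm_num at this
      exact this
    refine h1.congr fun j => ?_
    rw [hat (φ j)]
    show (1 + exp (-(t (φ j))))^2 = ((1 + exp (-(t (φ j)))) * cos (t (φ j)))^2
      + ((1 + exp (-(t (φ j)))) * sin (t (φ j)))^2
    linear_combination (1 + exp (-(t (φ j))))^2 * (sin_sq_add_cos_sq (t (φ j))).symm
  have hcirc : (x 0)^2 + (x 1)^2 = 1 := tendsto_nhds_unique hsum hsum2
  obtain ⟨θ, hθ0, hcθ, hsθ⟩ := circle_param hcirc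
  exact ⟨θ, hθ0, pt3_ext hcθ.symm hsθ.symm hx2⟩

lemma base_subset_accPts {a : ℕ → EuclideanSpace ℝ (Fin 3)} {t : ℕ → ℝ}
    (hat : ∀ k, a k = spt (t k)) (hmono : StrictMono t) (htop : Tendsto t atTop atTop)
    (hΔ0 : Tendsto (fun k => t (k+1) - t k) atTop (𝓝 0)) :
    baseCircle ⊆ accPts a := by
  rintro y ⟨θ, hθ, rfl⟩
  have hfreq : ∀ n : ℕ, ∃ᶠ k in atTop, dist (a k) (pt3 (cos θ) (sin θ) 0) < 1/(n+1) := by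
    intro n
    set ε : ℝ := 1/(n+1) with hεdef
    have hε : 0 < ε := by positivity
    have hε1 : ε ≤ 1 := by
      rw [hεdef]
      rw [div_le_one (by positivity)]
      push_cast; linarith
    rw [frequently_atTop]
    intro N
    -- eventual good behaviour
    have hev : ∀ᶠ k in atTop, 2 ≤ t k ∧ exp (-(t k)) < ε^2/8 ∧ t (k+1) - t k < ε/2 := by
      have h1 := htop.eventually_ge_atTop 2
      have h2 : Tendsto (fun k => exp (-(t k))) atTop (𝓝 0) :=
        Real.tendsto_exp_atBot.comp (tendsto_neg_atTop_atBot.comp htop)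
      have h3 := h2.eventually_lt_const (show (0:ℝ) < ε^2/8 by positivity)
      have h4 := hΔ0.eventually_lt_const (show (0:ℝ) < ε/2 by positivity)
      filter_upwards [h1, h3, h4] with k ha hb hc using ⟨ha, hb, hc⟩
    obtain ⟨K0, hK0⟩ := eventually_atTop.1 hev
    set K := max K0 N with hKdef
    -- choose a winding number
    obtain ⟨n₀, hn₀⟩ := exists_nat_gt ((t K - θ)/(2*π))
    set L := θ + (n₀:ℝ) * (2*π) with hLdef
    have hπ : 0 < 2*π := by positivity
    have hLK : t K < L := by
      rw [hLdef]
      have := (div_lt_iff₀ hπ).1 hn₀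
      linarith
    -- first index reaching L
    have hex : ∃ k, L ≤ t k := by
      obtain ⟨M, hM⟩ := eventually_atTop.1 (htop.eventually_ge_atTop L)
      exact ⟨M, hM M le_rfl⟩
    set k₀ := Nat.find hex with hk₀def
    have hk₀ : L ≤ t k₀ := Nat.find_spec hex
    have hmin : ∀ j < k₀, t j < L := by
      intro j hj
      have := Nat.find_min hex hj
      push_neg at this
      exact this
    have hK_lt : K < k₀ := by
      by_contra hcon
      push_neg at hcon
      have := hmono.monotone hcon
      linarith
    have hk₀pos : 0 < k₀ := lt_of_le_of_lt (Nat.zero_le K) hK_lt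
    set j := k₀ - 1 with hjdef
    have hjk : j + 1 = k₀ := Nat.succ_pred_eq_of_pos hk₀pos
    have hjK : K0 ≤ j := by
      have : K ≤ j := by omega
      exact le_trans (le_max_left _ _) this
    obtain ⟨hj2, hjexp, hjΔ⟩ := hK0 j hjK
    have hjlt : t j < L := hmin j (by omega)
    have htk₀ : t k₀ < L + ε/2 := by
      have h := hjΔ
      rw [hjk] at h
      linarith
    -- k₀ also satisfies the eventual bounds
    have hk₀K0 : K0 ≤ k₀ := le_trans hjK (by omega)
    obtain ⟨hk2, hkexp, -⟩ := hK0 k₀ hk₀K0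
    refine ⟨k₀, by omega, ?_⟩
    -- distance estimate
    have hyL : pt3 (cos θ) (sin θ) (0:ℝ) = cpt L 0 := by
      rw [cpt, hLdef]
      have hc : cos (θ + (n₀:ℝ) * (2*π)) = cos θ := by
        have := Real.cos_add_int_mul_two_pi θ (n₀:ℤ)
        push_cast at this
        rw [← this]
      have hs : sin (θ + (n₀:ℝ) * (2*π)) = sin θ := by
        have := Real.sin_add_int_mul_two_pi θ (n₀:ℤ)
        push_cast at this
        rw [← this]
      rw [hc, hs]
    rw [hyL, hat k₀, dist_comm]
    -- dist (cpt L 0) (spt (t k₀)) < ε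
    set τ := t k₀ with hτdef
    have hd := dist_cpt_spt_sq L 0 τ
    have hexp3 : exp (-τ/2)^2 = exp (-τ) := by rw [sq, ← exp_add]; congr 1; ring
    have hang : 1 - cos (τ - L) ≤ (τ - L)^2/2 := by
      have := Real.one_sub_sq_div_two_le_cos (x := τ - L)
      linarith
    have hτL : 0 ≤ τ - L := by linarith
    have hτL2 : τ - L < ε/2 := by linarith
    have hsq : (τ - L)^2 ≤ (ε/2)^2 := by nlinarith
    have hu : exp (-τ) < ε^2/8 := hkexp
    have hu0 : 0 < exp (-τ) := exp_pos _
    have hu1 : exp (-τ) ≤ 1 := by nlinarith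
    have hdist2 : dist (cpt L 0) (spt τ) ^ 2 < ε^2 := by
      rw [hd]
      have expand : (1 + exp (-τ))^2 - 2*(1 + exp (-τ))*cos (τ - L) + 1 + (exp (-τ/2) - 0)^2
          = exp (-τ)^2 + 2*(1 + exp (-τ))*(1 - cos (τ - L)) + exp (-τ/2)^2 := by ring
      rw [expand, hexp3]
      have h1 : 2*(1 + exp (-τ))*(1 - cos (τ - L)) ≤ 2*(τ - L)^2 := by
        have hcosle := Real.cos_le_one (τ - L)
        nlinarith
      nlinarith
    have := dist_nonneg (x := cpt L 0) (y := spt τ)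
    nlinarith [hdist2]
  obtain ⟨φ, hφmono, hφP⟩ := Filter.extraction_forall_of_frequently hfreq
  refine ⟨φ, hφmono, ?_⟩
  rw [tendsto_iff_dist_tendsto_zero]
  refine squeeze_zero (fun n => dist_nonneg) (fun n => (hφP n).le) ?_
  exact tendsto_one_div_add_atTop_nhds_zero_nat

/-- failure of alternating projections between the cylinder mantle and the
logarithmic spiral: any alternating sequence started on the spiral off the base circle has
successive differences tending to zero yet fails to converge, and its accumulation points
fill the whole base circle. -/
theorem statement16 (a b : ℕ → EuclideanSpace ℝ (Fin 3))
    (hstart : a 0 ∈ spiral \ baseCircle)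
    (hb : ∀ k, b k ∈ projSet cylinder (a k))
    (ha : ∀ k, a (k+1) ∈ projSet spiral (b k)) :
    Tendsto (fun k => a k - a (k+1)) atTop (𝓝 0) ∧
    Tendsto (fun k => b k - b (k+1)) atTop (𝓝 0) ∧
    Tendsto (fun k => a k - b k) atTop (𝓝 0) ∧
    (¬ ∃ l, Tendsto a atTop (𝓝 l)) ∧
    (¬ ∃ l, Tendsto b atTop (𝓝 l)) ∧
    accPts a = baseCircle ∧ accPts b = baseCircle := by
  -- construct the parameter sequence
  have hex : ∀ k, ∃ τ : ℝ, 0 ≤ τ ∧ a k = spt τ := by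
    intro k
    induction k with
    | zero =>
      obtain ⟨hsp, hnb⟩ := hstart
      rcases hsp with ⟨τ, hτ, hEq⟩ | hbase
      · exact ⟨τ, hτ, hEq⟩
      · exact absurd hbase hnb
    | succ k ih =>
      obtain ⟨τ, hτ, hak⟩ := ih
      have hbk : b k = cpt τ (exp (-τ/2)) := by
        apply cyl_proj hτ
        rw [← hak]; exact hb k
      have hprj : a (k+1) ∈ projSet spiral (cpt τ (exp (-τ/2))) := by
        rw [← hbk]; exact ha k
      obtain ⟨s, hs, hy, -⟩ := spiral_proj hτ hprj
      exact ⟨s, by linarith, hy⟩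
  choose t ht0 hat using hex
  have hbk : ∀ k, b k = cpt (t k) (exp (-(t k)/2)) := by
    intro k
    apply cyl_proj (ht0 k)
    rw [← hat k]; exact hb k
  have hstep : ∀ k, t k < t (k+1) ∧ dist (b k) (a (k+1)) < exp (-(t k)) := by
    intro k
    have hprj : a (k+1) ∈ projSet spiral (cpt (t k) (exp (-(t k)/2))) := by
      rw [← hbk k]; exact ha k
    obtain ⟨s, hs, hy, hd⟩ := spiral_proj (ht0 k) hprj
    have hts : t (k+1) = s := spt_inj ((hat (k+1)).symm.trans hy)
    refine ⟨by rw [hts]; exact hs, ?_⟩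
    rw [← hbk k] at hd
    exact hd
  have hmono : StrictMono t := strictMono_nat_of_lt_succ fun k => (hstep k).1
  have hdab : ∀ k, dist (a k) (b k) = exp (-(t k)) := by
    intro k; rw [hat k, hbk k]; exact dist_spt_cpt (t k)
  -- the parameters tend to infinity
  have htop : Tendsto t atTop atTop := by
    by_contra hnot
    have hbdd : BddAbove (range t) := by
      by_contra hbd
      exact hnot (tendsto_atTop_atTop_of_monotone' hmono.monotone hbd)
    have htT : Tendsto t atTop (𝓝 (⨆ k, t k)) := tendsto_atTop_ciSup hmono.monotone hbdd
    set T := ⨆ k, t k with hT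
    have hT0 : 0 ≤ T := le_trans (ht0 0) (le_ciSup hbdd 0)
    have h1 : Tendsto (fun k => t (k+1)) atTop (𝓝 T) := htT.comp (tendsto_add_atTop_nat 1)
    have hal : Tendsto (fun k => a (k+1)) atTop (𝓝 (spt T)) :=
      Tendsto.congr (fun k => (hat (k+1)).symm) ((continuous_spt.tendsto T).comp h1)
    have hbl : Tendsto b atTop (𝓝 (cpt T (exp (-T/2)))) :=
      Tendsto.congr (fun k => (hbk k).symm) ((continuous_cptcurve.tendsto T).comp htT)
    have hdist : Tendsto (fun k => dist (b k) (a (k+1))) atTop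
        (𝓝 (dist (cpt T (exp (-T/2))) (spt T))) := hbl.dist hal
    have hinf : Tendsto (fun k => infDist (b k) spiral) atTop
        (𝓝 (infDist (cpt T (exp (-T/2))) spiral)) :=
      ((continuous_infDist_pt spiral).tendsto _).comp hbl
    have heq : (fun k => dist (b k) (a (k+1))) = fun k => infDist (b k) spiral := by
      funext k
      have h2 := (ha k).2
      rwa [← dist_eq_norm] at h2
    rw [heq] at hdist
    have hfix : infDist (cpt T (exp (-T/2))) spiral = dist (cpt T (exp (-T/2))) (spt T) :=
      tendsto_nhds_unique hinf hdist
    obtain ⟨s, hs, hws⟩ := gfun_witness hT0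
    have hwlt : dist (cpt T (exp (-T/2))) (spt s) < exp (-T) := by
      nlinarith [dist_nonneg (x := cpt T (exp (-T/2))) (y := spt s), exp_pos (-T)]
    have h3 : infDist (cpt T (exp (-T/2))) spiral ≤ dist (cpt T (exp (-T/2))) (spt s) :=
      infDist_le_dist_of_mem (spt_mem (by linarith))
    have h4 : dist (cpt T (exp (-T/2))) (spt T) = exp (-T) := by
      rw [dist_comm]; exact dist_spt_cpt T
    linarith
  have hexp0 : Tendsto (fun k => exp (-(t k))) atTop (𝓝 0) :=
    Real.tendsto_exp_atBot.comp (tendsto_neg_atTop_atBot.comp htop)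
  have hexp02 : Tendsto (fun k => 2 * exp (-(t k))) atTop (𝓝 0) := by
    simpa using hexp0.const_mul 2
  -- third difference
  have g3 : Tendsto (fun k => a k - b k) atTop (𝓝 0) := by
    rw [tendsto_zero_iff_norm_tendsto_zero]
    refine squeeze_zero (fun k => norm_nonneg _) (fun k => ?_) hexp0
    rw [← dist_eq_norm, hdab k]
  -- first difference
  have g1 : Tendsto (fun k => a k - a (k+1)) atTop (𝓝 0) := by
    rw [tendsto_zero_iff_norm_tendsto_zero]
    refine squeeze_zero (fun k => norm_nonneg _) (fun k => ?_) hexp02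
    rw [← dist_eq_norm]
    calc dist (a k) (a (k+1)) ≤ dist (a k) (b k) + dist (b k) (a (k+1)) := dist_triangle _ _ _
      _ ≤ 2 * exp (-(t k)) := by
          rw [hdab k]; linarith [(hstep k).2]
  -- second difference
  have g2 : Tendsto (fun k => b k - b (k+1)) atTop (𝓝 0) := by
    rw [tendsto_zero_iff_norm_tendsto_zero]
    refine squeeze_zero (fun k => norm_nonneg _) (fun k => ?_) hexp02
    rw [← dist_eq_norm]
    have h1 : dist (b k) (b (k+1)) ≤ dist (b k) (a (k+1)) + dist (a (k+1)) (b (k+1)) :=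
      dist_triangle _ _ _
    have h2 : dist (a (k+1)) (b (k+1)) = exp (-(t (k+1))) := hdab (k+1)
    have h3 : exp (-(t (k+1))) ≤ exp (-(t k)) := exp_le_exp.2 (by linarith [(hstep k).1])
    linarith [(hstep k).2]
  -- increments tend to zero
  have hΔ0 : Tendsto (fun k => t (k+1) - t k) atTop (𝓝 0) := by
    have hπexp : Tendsto (fun k => π * exp (-(t k))) atTop (𝓝 0) := by
      simpa using hexp0.const_mul π
    refine squeeze_zero' (Eventually.of_forall fun k => by linarith [(hstep k).1]) ?_ hπexp
    filter_upwards [htop.eventually_ge_atTop 2] with k h2k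
    have hdk := (hstep k).2
    rw [hbk k, hat (k+1)] at hdk
    exact increment_bound h2k (hstep k).1 hdk
  -- accumulation points
  have hacca : accPts a = baseCircle :=
    Set.Subset.antisymm (accPts_subset_base hat htop)
      (base_subset_accPts hat hmono htop hΔ0)
  have haccb : accPts b = baseCircle := (accPts_congr g3).symm.trans hacca
  -- non-convergence
  have hpt1 : pt3 1 0 0 ∈ baseCircle := ⟨0, le_rfl, by rw [Real.cos_zero, Real.sin_zero]⟩
  have hpt2 : pt3 (-1) 0 0 ∈ baseCircle := ⟨π, Real.pi_pos.le, by rw [Real.cos_pi, Real.sin_pi]⟩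
  have hne : (pt3 1 0 0 : EuclideanSpace ℝ (Fin 3)) ≠ pt3 (-1) 0 0 := by
    intro hEq
    have h0 : (1:ℝ) = -1 := congrArg (fun x => x 0) hEq
    norm_num at h0
  have hnc : ∀ (u : ℕ → EuclideanSpace ℝ (Fin 3)), accPts u = baseCircle →
      ¬ ∃ l, Tendsto u atTop (𝓝 l) := by
    rintro u hu ⟨l, hl⟩
    have key : ∀ x ∈ accPts u, x = l := by
      rintro x ⟨φ, hφ, hconv⟩
      exact tendsto_nhds_unique hconv (hl.comp hφ.tendsto_atTop)
    have h1 := key (pt3 1 0 0) (by rw [hu]; exact hpt1)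
    have h2 := key (pt3 (-1) 0 0) (by rw [hu]; exact hpt2)
    exact hne (h1.trans h2.symm)
  exact ⟨g1, g2, g3, hnc a hacca, hnc b haccb, hacca, haccb⟩
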